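/- Let G be a finite connected simple graph with vertex set V = {v_1,…,v_n} (n ≥ 2) and commensurable edge lengths, i.e. L_{kj} = n_{kj}·L₀ for positive integers n_{kj} and some L₀ > 0. Then for every μ with 0 < μ < min_{(k,j)∈E} (π/L_{kj})² and every nonnegative integer p, setting λ = (√μ + 2πp/L₀)², the matrix D_{λ,V} is defined (sin(√λ·L_{kj}) ≠ 0 for every edge) and the semigroup (e^{−t·D_{λ,V}})_{t≥0} is strongly positive. -/

import Mathlib

open Matrix

/-- `β_{kj}(λ)` for an edge of length `L`. -/
noncomputable def betaFn (L lam : ℝ) : ℝ :=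
  if 0 < lam then Real.sqrt lam / Real.sin (Real.sqrt lam * L)
  else if lam = 0 then 1 / L
  else Real.sqrt (-lam) / Real.sinh (Real.sqrt (-lam) * L)

/-- `α_{kj}(λ)` for an edge of length `L`. -/
noncomputable def alphaFn (L lam : ℝ) : ℝ :=
  if 0 < lam then Real.sqrt lam * Real.cos (Real.sqrt lam * L) / Real.sin (Real.sqrt lam * L)
  else if lam = 0 then 1 / L
  else Real.sqrt (-lam) * Real.cosh (Real.sqrt (-lam) * L) / Real.sinh (Real.sqrt (-lam) * L)

/-- The Dirichlet-to-Neumann matrix `D_{λ,V}` of a quantum graph with adjacency `G` and edge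
lengths `L`. -/
noncomputable def DtN {V : Type*} [Fintype V] [DecidableEq V]
    (G : SimpleGraph V) [DecidableRel G.Adj] (L : V → V → ℝ) (lam : ℝ) :
    Matrix V V ℝ := fun k j =>
  if k = j then ∑ l, (if G.Adj k l then alphaFn (L k l) lam else 0)
  else if G.Adj k j then -betaFn (L k j) lam else 0

private lemma pow_entry_nonneg {n : ℕ} {A : Matrix (Fin n) (Fin n) ℝ}
    (h : ∀ i j, 0 ≤ A i j) : ∀ (k : ℕ) (i j : Fin n), 0 ≤ (A ^ k) i j := by
  intro k
  induction k with
  | zero =>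
      intro i j
      rw [pow_zero]
      by_cases hij : i = j
      · subst hij; simp [Matrix.one_apply_eq]
      · simp [Matrix.one_apply_ne hij]
  | succ m ih =>
      intro i j
      rw [pow_succ, Matrix.mul_apply]
      exact Finset.sum_nonneg fun l _ => mul_nonneg (ih i l) (h l j)

private lemma walk_pow_entry_pos {n : ℕ} {G : SimpleGraph (Fin n)}
    {A : Matrix (Fin n) (Fin n) ℝ}
    (h0 : ∀ i j, 0 ≤ A i j) (hadj : ∀ i j, G.Adj i j → 0 < A i j)
    {i j : Fin n} (w : G.Walk i j) : 0 < (A ^ w.length) i j := by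
  induction w with
  | nil => simp [Matrix.one_apply_eq]
  | @cons u v j' huv w' ih =>
      rw [SimpleGraph.Walk.length_cons, pow_succ', Matrix.mul_apply]
      refine Finset.sum_pos' (fun l _ => mul_nonneg (h0 u l) (pow_entry_nonneg h0 _ l j')) ?_
      exact ⟨v, Finset.mem_univ v, mul_pos (hadj u v huv) ih⟩

private lemma exp_entry_pos_of_nonneg {n : ℕ} (G : SimpleGraph (Fin n))
    (hpre : G.Preconnected) {A : Matrix (Fin n) (Fin n) ℝ}
    (h0 : ∀ i j, 0 ≤ A i j) (hadj : ∀ i j, G.Adj i j → 0 < A i j)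
    (i j : Fin n) : 0 < NormedSpace.exp A i j := by
  obtain ⟨w⟩ := hpre i j
  have hsum : Summable (fun k : ℕ => (Nat.factorial k : ℝ)⁻¹ • A ^ k) := by
    letI : SeminormedRing (Matrix (Fin n) (Fin n) ℝ) := Matrix.linftyOpSemiNormedRing
    letI : NormedRing (Matrix (Fin n) (Fin n) ℝ) := Matrix.linftyOpNormedRing
    letI : NormedAlgebra ℝ (Matrix (Fin n) (Fin n) ℝ) := Matrix.linftyOpNormedAlgebra
    exact NormedSpace.expSeries_summable' A
  have hsum1 : Summable (fun k : ℕ => ((Nat.factorial k : ℝ)⁻¹ • A ^ k) i) := (Pi.summable.mp hsum) i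
  have hsum2 : Summable (fun k : ℕ => ((Nat.factorial k : ℝ)⁻¹ • A ^ k) i j) := (Pi.summable.mp hsum1) j
  have hentry : NormedSpace.exp A i j = ∑' k : ℕ, ((Nat.factorial k : ℝ)⁻¹ • A ^ k) i j := by
    rw [NormedSpace.exp_eq_tsum ℝ]
    show (∑' k : ℕ, (Nat.factorial k : ℝ)⁻¹ • A ^ k) i j = _
    exact (congrFun (tsum_apply hsum) j).trans (tsum_apply hsum1)
  rw [hentry]
  have hterm0 : ∀ k : ℕ, 0 ≤ ((Nat.factorial k : ℝ)⁻¹ • A ^ k) i j := by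
    intro k
    have hf : (0:ℝ) ≤ (Nat.factorial k : ℝ)⁻¹ := by positivity
    simpa [Matrix.smul_apply, smul_eq_mul] using mul_nonneg hf (pow_entry_nonneg h0 k i j)
  have htermpos : 0 < ((Nat.factorial w.length : ℝ)⁻¹ • A ^ w.length) i j := by
    have hw := walk_pow_entry_pos h0 hadj w
    have hfac : (0:ℝ) < (Nat.factorial w.length : ℝ)⁻¹ := by positivity
    simpa [Matrix.smul_apply, smul_eq_mul] using mul_pos hfac hw
  exact Summable.tsum_pos hsum2 hterm0 w.length htermpos

/-- Let `G` be a finite connected quantum graph with commensurable edge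
lengths `L_{kj} = n_{kj}·L₀`.  Then for every `μ` with `0 < μ < min_{(k,j)∈E} (π/L_{kj})²` and
every `p ∈ ℕ`, setting `λ = (√μ + 2πp/L₀)²`, the matrix `D_{λ,V}` is defined
(`sin(√λ·L_{kj}) ≠ 0` on every edge) and the semigroup `(e^{−tD_{λ,V}})_{t≥0}` is strongly
positive. -/
theorem dtn_commensurable_strongly_positive {n : ℕ} (hn : 2 ≤ n)
    (G : SimpleGraph (Fin n)) [DecidableRel G.Adj] (hconn : G.Connected)
    (L : Fin n → Fin n → ℝ) (hsymm : ∀ k j, L k j = L j k)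
    (hLpos : ∀ k j, G.Adj k j → 0 < L k j)
    (L₀ : ℝ) (hL₀ : 0 < L₀) (nkj : Fin n → Fin n → ℕ)
    (hcomm : ∀ k j, G.Adj k j → 0 < nkj k j ∧ L k j = (nkj k j : ℝ) * L₀)
    (μ : ℝ) (hμ : 0 < μ) (hμlt : ∀ k j, G.Adj k j → μ < (Real.pi / L k j) ^ 2)
    (p : ℕ) (lam : ℝ) (hlam : lam = (Real.sqrt μ + 2 * Real.pi * p / L₀) ^ 2) :
    (∀ k j, G.Adj k j → Real.sin (Real.sqrt lam * L k j) ≠ 0) ∧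
      ∀ t : ℝ, 0 < t → ∀ i j, 0 < NormedSpace.exp (t • (-(DtN G L lam))) i j := by
  have hL₀ne : L₀ ≠ 0 := ne_of_gt hL₀
  have hsqμ : 0 < Real.sqrt μ := Real.sqrt_pos.mpr hμ
  have hbase : 0 < Real.sqrt μ + 2 * Real.pi * p / L₀ := by
    have h2 : (0:ℝ) ≤ 2 * Real.pi * p / L₀ := by positivity
    linarith
  have hlampos : 0 < lam := by rw [hlam]; positivity
  have hsqrtlam : Real.sqrt lam = Real.sqrt μ + 2 * Real.pi * p / L₀ := by
    rw [hlam, Real.sqrt_sq hbase.le]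
  have hsin : ∀ k j, G.Adj k j →
      Real.sin (Real.sqrt lam * L k j) = Real.sin (Real.sqrt μ * L k j) := by
    intro k j hadj
    obtain ⟨hnk, hLk⟩ := hcomm k j hadj
    have harg : Real.sqrt lam * L k j
        = Real.sqrt μ * L k j + (p * nkj k j : ℕ) * (2 * Real.pi) := by
      rw [hsqrtlam, hLk]
      push_cast
      field_simp
    rw [harg, Real.sin_add_nat_mul_two_pi]
  have hsinpos : ∀ k j, G.Adj k j → 0 < Real.sin (Real.sqrt μ * L k j) := by
    intro k j hadj
    have hL := hLpos k j hadj
    have h1 : 0 < Real.sqrt μ * L k j := mul_pos hsqμ hL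
    have hπL : 0 < Real.pi / L k j := div_pos Real.pi_pos hL
    have h2 : Real.sqrt μ < Real.pi / L k j := by
      calc Real.sqrt μ < Real.sqrt ((Real.pi / L k j) ^ 2) :=
            Real.sqrt_lt_sqrt hμ.le (hμlt k j hadj)
        _ = Real.pi / L k j := Real.sqrt_sq hπL.le
    have h3 : Real.sqrt μ * L k j < Real.pi := (lt_div_iff₀ hL).mp h2
    exact Real.sin_pos_of_pos_of_lt_pi h1 h3
  have hbeta : ∀ k j, G.Adj k j → 0 < betaFn (L k j) lam := by
    intro k j hadj
    rw [betaFn, if_pos hlampos]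
    refine div_pos (Real.sqrt_pos.mpr hlampos) ?_
    rw [hsin k j hadj]
    exact hsinpos k j hadj
  refine ⟨fun k j hadj => by rw [hsin k j hadj]; exact (hsinpos k j hadj).ne', ?_⟩
  intro t ht i j
  set D : Matrix (Fin n) (Fin n) ℝ := DtN G L lam with hD
  set c : ℝ := t * ∑ l : Fin n, |D l l| with hc
  set A : Matrix (Fin n) (Fin n) ℝ := t • (-D) + c • (1 : Matrix (Fin n) (Fin n) ℝ) with hA
  have hoffdiag : ∀ a b, a ≠ b →
      A a b = t * (if G.Adj a b then betaFn (L a b) lam else 0) := by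
    intro a b hab
    have hDab : D a b = if G.Adj a b then -betaFn (L a b) lam else 0 := by
      rw [hD]; simp [DtN, if_neg hab]
    simp only [hA, Matrix.add_apply, Matrix.smul_apply, Matrix.neg_apply,
      Matrix.one_apply_ne hab, smul_zero, add_zero, smul_eq_mul, hDab]
    split_ifs <;> ring
  have hA0 : ∀ a b, 0 ≤ A a b := by
    intro a b
    by_cases hab : a = b
    · subst hab
      have h1 : D a a ≤ ∑ l : Fin n, |D l l| :=
        le_trans (le_abs_self _)
          (Finset.single_le_sum (f := fun l : Fin n => |D l l|) (fun l _ => abs_nonneg _) (Finset.mem_univ a))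
      have hval : A a a = t * (-(D a a)) + c := by
        simp [hA, Matrix.add_apply, Matrix.smul_apply, Matrix.neg_apply,
          Matrix.one_apply_eq, smul_eq_mul]
      rw [hval, hc]
      nlinarith
    · rw [hoffdiag a b hab]
      split_ifs with h
      · exact (mul_pos ht (hbeta a b h)).le
      · simp
  have hAadj : ∀ a b, G.Adj a b → 0 < A a b := by
    intro a b h
    rw [hoffdiag a b h.ne, if_pos h]
    exact mul_pos ht (hbeta a b h)
  have hsplit : t • (-D) = A + (-c) • (1 : Matrix (Fin n) (Fin n) ℝ) := by
    rw [hA]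
    module
  have hcomm' : Commute A ((-c) • (1 : Matrix (Fin n) (Fin n) ℝ)) :=
    (Commute.one_right A).smul_right _
  have hexp : NormedSpace.exp (t • (-D)) = Real.exp (-c) • NormedSpace.exp A := by
    rw [hsplit, Matrix.exp_add_of_commute A _ hcomm', Matrix.smul_one_eq_diagonal,
      Matrix.exp_diagonal]
    ext a b
    simp [Matrix.mul_diagonal, Matrix.smul_apply, Pi.coe_exp, ← Real.exp_eq_exp_ℝ,
      mul_comm]
  rw [hexp]
  have hpos := exp_entry_pos_of_nonneg G hconn.preconnected hA0 hAadj i j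
  simpa [Matrix.smul_apply, smul_eq_mul] using mul_pos (Real.exp_pos (-c)) hpos
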